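/- Let H_R, H_A, H_B be finite-dimensional complex Hilbert spaces, let ψ ∈ H_R ⊗ H_A ⊗ H_B be a unit vector, φ = |ψ⟩⟨ψ|, and ω = Tr_R(φ) the reduced density operator on H_A ⊗ H_B. Let {Λ̃_{w_A}}_{w_A ∈ S_A} and {Λ_{w_A}}_{w_A ∈ S_A} be finite families of positive semidefinite operators on H_A, and {Λ_{w_B}}_{w_B ∈ S_B} a finite family of positive semidefinite operators on H_B. Let {|w_A⟩}_{w_A∈S_A} and {|w_B⟩}_{w_B∈S_B} be orthonormal families in auxiliary spaces ℂ^{S_A}, ℂ^{S_B}. Then ∑_{w_A∈S_A} ∑_{w_B∈S_B} ‖√ω ((Λ̃_{w_A} − Λ_{w_A}) ⊗ Λ_{w_B}) √ω‖₁ = ‖∑_{w_A,w_B} (Tr_{AB}{(I_R ⊗ (Λ̃_{w_A} ⊗ Λ_{w_B})) φ} − Tr_{AB}{(I_R ⊗ (Λ_{w_A} ⊗ Λ_{w_B})) φ}) ⊗ |w_A⟩⟨w_A| ⊗ |w_B⟩⟨w_B|‖₁, where Tr_{AB} denotes the partial trace over H_A ⊗ H_B (so each such partial trace is an operator on H_R).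 -/

import Mathlib

open scoped Kronecker ComplexOrder

/-- The trace norm (sum of singular values) of a complex square matrix. -/
noncomputable def traceNorm {n : Type*} [Fintype n] [DecidableEq n]
    (M : Matrix n n ℂ) : ℝ :=
  (((Matrix.posSemidef_conjTranspose_mul_self M).1.eigenvectorUnitary : Matrix n n ℂ) *
    Matrix.diagonal (((↑) : ℝ → ℂ) ∘ Real.sqrt ∘ (Matrix.posSemidef_conjTranspose_mul_self M).1.eigenvalues) *
    (star (Matrix.posSemidef_conjTranspose_mul_self M).1.eigenvectorUnitary : Matrix n n ℂ)).trace.re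

-- The positive semidefinite square root of a matrix (junk value `0` if not PSD).
open Classical in
noncomputable def matSqrt {n : Type*} [Fintype n] [DecidableEq n]
    (M : Matrix n n ℂ) : Matrix n n ℂ :=
  if h : M.PosSemidef then
    (h.1.eigenvectorUnitary : Matrix n n ℂ) * Matrix.diagonal (((↑) : ℝ → ℂ) ∘ Real.sqrt ∘ h.1.eigenvalues) *
      (star h.1.eigenvectorUnitary : Matrix n n ℂ) else 0

section SqrtCompat

open Matrix
open scoped MatrixOrder

/-- The PSD square root, as spelled in the frozen definitions. -/
noncomputable def Matrix.PosSemidef.sqrt {n : Type*} [Fintype n] [DecidableEq n]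
    {M : Matrix n n ℂ} (h : M.PosSemidef) : Matrix n n ℂ :=
  (h.1.eigenvectorUnitary : Matrix n n ℂ) * Matrix.diagonal (((↑) : ℝ → ℂ) ∘ Real.sqrt ∘ h.1.eigenvalues) *
    (star h.1.eigenvectorUnitary : Matrix n n ℂ)

lemma Matrix.PosSemidef.sqrt_eq_cfcSqrt {n : Type*} [Fintype n] [DecidableEq n]
    {M : Matrix n n ℂ} (h : M.PosSemidef) : h.sqrt = CFC.sqrt M := by
  rw [CFC.sqrt_eq_cfc, cfc_nnreal_eq_real _ M h.nonneg, h.1.cfc_eq, IsHermitian.cfc,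
    Unitary.conjStarAlgAut_apply]
  have hf : (fun x : ℝ => ((NNReal.sqrt x.toNNReal : ℝ))) = Real.sqrt :=
    funext fun x => by rw [Real.sqrt]
  rw [hf]
  rfl

lemma Matrix.PosSemidef.posSemidef_sqrt {n : Type*} [Fintype n] [DecidableEq n]
    {M : Matrix n n ℂ} (h : M.PosSemidef) : h.sqrt.PosSemidef := by
  rw [h.sqrt_eq_cfcSqrt]; exact (CFC.sqrt_nonneg M).posSemidef

lemma Matrix.PosSemidef.sqrt_mul_self {n : Type*} [Fintype n] [DecidableEq n]
    {M : Matrix n n ℂ} (h : M.PosSemidef) : h.sqrt * h.sqrt = M := by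
  rw [h.sqrt_eq_cfcSqrt]; exact CFC.sqrt_mul_sqrt_self M h.nonneg

lemma Matrix.PosSemidef.eq_sqrt_of_sq_eq {n : Type*} [Fintype n] [DecidableEq n]
    {B M : Matrix n n ℂ} (hB : B.PosSemidef) (h : M.PosSemidef) (hsq : B ^ 2 = M) :
    B = h.sqrt := by
  rw [h.sqrt_eq_cfcSqrt]
  exact (CFC.sqrt_unique (by rw [← sq]; exact hsq) hB.nonneg).symm

lemma Matrix.posSemidef_iff_eq_transpose_mul_self {n : Type*} [Fintype n] [DecidableEq n]
    {A : Matrix n n ℂ} : A.PosSemidef ↔ ∃ B : Matrix n n ℂ, A = Bᴴ * B :=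
  ⟨fun h => by
    obtain ⟨B, hB⟩ := CStarAlgebra.nonneg_iff_eq_star_mul_self.mp h.nonneg
    exact ⟨B, hB⟩, fun ⟨B, hB⟩ => hB ▸ posSemidef_conjTranspose_mul_self B⟩

lemma traceNorm_eq_sqrt_trace {n : Type*} [Fintype n] [DecidableEq n] (M : Matrix n n ℂ) :
    traceNorm M = ((Matrix.posSemidef_conjTranspose_mul_self M).sqrt.trace).re := rfl

lemma matSqrt_of_posSemidef {n : Type*} [Fintype n] [DecidableEq n] {M : Matrix n n ℂ}
    (h : M.PosSemidef) : matSqrt M = h.sqrt := by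
  rw [matSqrt, dif_pos h]; rfl

end SqrtCompat

/-- Partial trace over the first (left) tensor factor. -/
noncomputable def ptraceLeft {R S : Type*} [Fintype R]
    (M : Matrix (R × S) (R × S) ℂ) : Matrix S S ℂ :=
  Matrix.of fun x y => ∑ r : R, M (r, x) (r, y)

/-- Partial trace over the second (right) tensor factor. -/
noncomputable def ptraceRight {R S : Type*} [Fintype S]
    (M : Matrix (R × S) (R × S) ℂ) : Matrix R R ℂ :=
  Matrix.of fun r r' => ∑ x : S, M (r, x) (r', x)

section Aux

open Matrix Polynomial Finset

set_option linter.unusedSectionVars false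

variable {l m n p q : Type*} [Fintype l] [DecidableEq l] [Fintype m] [DecidableEq m]
  [Fintype n] [DecidableEq n] [Fintype p] [DecidableEq p] [Fintype q] [DecidableEq q]

private lemma eval_charpoly' {R : Type*} [CommRing R] (M : Matrix m m R) (x : R) :
    M.charpoly.eval x = (x • (1 : Matrix m m R) - M).det := by
  rw [Matrix.charpoly, ← Polynomial.coe_evalRingHom, RingHom.map_det]
  congr 1
  ext i j
  by_cases h : i = j <;>
    simp [h, charmatrix_apply, Matrix.diagonal_apply, Matrix.one_apply, Matrix.smul_apply]

private lemma charpoly_mul_X_pow (A : Matrix m n ℂ) (B : Matrix n m ℂ) :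
    (A * B).charpoly * X ^ (Fintype.card n) = (B * A).charpoly * X ^ (Fintype.card m) := by
  apply Polynomial.eq_of_infinite_eval_eq
  apply Set.Infinite.mono (s := {x : ℂ | x ≠ 0})
  swap
  · exact Set.Finite.infinite_compl (Set.finite_singleton (0 : ℂ))
  intro x hx
  simp only [Set.mem_setOf_eq] at hx ⊢
  have hinv1 : Invertible (1 : Matrix n n ℂ) := invertibleOne
  have hinv : Invertible (x • (1 : Matrix m m ℂ)) :=
    ⟨x⁻¹ • 1, by simp [smul_smul, inv_mul_cancel₀ hx, mul_inv_cancel₀ hx],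
      by simp [smul_smul, inv_mul_cancel₀ hx, mul_inv_cancel₀ hx]⟩
  have hIof : ⅟(x • (1 : Matrix m m ℂ)) = x⁻¹ • 1 := by
    exact invOf_eq_right_inv (by simp [smul_smul, inv_mul_cancel₀ hx, mul_inv_cancel₀ hx])
  have h1 : (Matrix.fromBlocks (x • (1 : Matrix m m ℂ)) A B (1 : Matrix n n ℂ)).det
      = (x • (1 : Matrix m m ℂ) - A * B).det := by
    rw [Matrix.det_fromBlocks₂₂]
    simp
  have h2 : (Matrix.fromBlocks (x • (1 : Matrix m m ℂ)) A B (1 : Matrix n n ℂ)).det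
      = x ^ (Fintype.card m) * ((1 : Matrix n n ℂ) - x⁻¹ • (B * A)).det := by
    rw [Matrix.det_fromBlocks₁₁]
    rw [hIof]
    congr 1
    · simp [Matrix.det_smul]
    · congr 1
      rw [Matrix.mul_smul, Matrix.mul_one, Matrix.smul_mul]
  have h3 : (x • (1 : Matrix n n ℂ) - B * A).det
      = x ^ (Fintype.card n) * ((1 : Matrix n n ℂ) - x⁻¹ • (B * A)).det := by
    rw [← Matrix.det_smul]
    congr 1
    rw [smul_sub, smul_smul, mul_inv_cancel₀ hx, one_smul]
  simp only [eval_mul, eval_pow, eval_X, eval_charpoly']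
  rw [← h1, h2, h3]
  ring

private lemma charpoly_mul_comm' (A : Matrix m m ℂ) (B : Matrix m m ℂ) :
    (A * B).charpoly = (B * A).charpoly :=
  mul_right_cancel₀ (pow_ne_zero _ Polynomial.X_ne_zero) (charpoly_mul_X_pow A B)

private lemma charpoly_diagonal {R : Type*} [CommRing R] (d : n → R) :
    (Matrix.diagonal d).charpoly = ∏ i, (X - C (d i)) := by
  rw [Matrix.charpoly]
  have : charmatrix (Matrix.diagonal d) = Matrix.diagonal (fun i => X - C (d i)) := by
    ext i j
    by_cases h : i = j <;> simp [charmatrix_apply, Matrix.diagonal_apply, h]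
  rw [this, Matrix.det_diagonal]

private lemma charpoly_isHermitian {M : Matrix n n ℂ} (hM : M.IsHermitian) :
    M.charpoly = ∏ i, (X - C ((hM.eigenvalues i : ℝ) : ℂ)) := by
  set U := (hM.eigenvectorUnitary : Matrix n n ℂ) with hU
  set D := Matrix.diagonal ((RCLike.ofReal ∘ hM.eigenvalues : n → ℂ)) with hD
  calc M.charpoly = ((U * D) * star U).charpoly := by
        rw [← show M = U * D * star U from hM.spectral_theorem]
    _ = (star U * (U * D)).charpoly := charpoly_mul_comm' _ _
    _ = D.charpoly := by
        rw [← mul_assoc, Unitary.coe_star_mul_self, one_mul]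
    _ = ∏ i, (X - C ((hM.eigenvalues i : ℝ) : ℂ)) := by
        rw [hD, _root_.charpoly_diagonal]
        rfl

private lemma traceNorm_isHermitian {M : Matrix n n ℂ} (hM : M.IsHermitian) :
    traceNorm M = ∑ i, |hM.eigenvalues i| := by
  set U := (hM.eigenvectorUnitary : Matrix n n ℂ) with hU
  set D := Matrix.diagonal (RCLike.ofReal ∘ hM.eigenvalues : n → ℂ) with hD
  set E := Matrix.diagonal (RCLike.ofReal ∘ fun i => |hM.eigenvalues i| : n → ℂ) with hE
  set T := U * E * star U with hT
  have hstar : star U * U = 1 := Unitary.coe_star_mul_self _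
  have hEpsd : E.PosSemidef := by
    refine Matrix.posSemidef_diagonal_iff.mpr fun i => ?_
    rw [Function.comp_apply, RCLike.nonneg_iff]
    constructor
    · simp only [RCLike.ofReal_re]; exact abs_nonneg _
    · simp only [RCLike.ofReal_im]
  have hTpsd : T.PosSemidef := by
    rw [hT, Matrix.star_eq_conjTranspose]
    exact hEpsd.mul_mul_conjTranspose_same U
  have hEE : E * E = D * D := by
    rw [hE, hD, Matrix.diagonal_mul_diagonal, Matrix.diagonal_mul_diagonal]
    refine congrArg Matrix.diagonal (funext fun i => ?_)
    simp only [Function.comp_apply]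
    rw [← RCLike.ofReal_mul, ← RCLike.ofReal_mul, abs_mul_abs_self]
  have hT2 : T ^ 2 = Mᴴ * M := by
    rw [hM.eq, pow_two, hT]
    calc U * E * star U * (U * E * star U) = U * (E * (star U * U) * E) * star U := by
          simp only [mul_assoc]
      _ = U * (D * (star U * U) * D) * star U := by rw [hstar, mul_one, mul_one, hEE]
      _ = U * D * star U * (U * D * star U) := by simp only [mul_assoc]
      _ = M * M := by rw [← show M = U * D * star U from hM.spectral_theorem]
  have hsq : T = (Matrix.posSemidef_conjTranspose_mul_self M).sqrt :=
    hTpsd.eq_sqrt_of_sq_eq (Matrix.posSemidef_conjTranspose_mul_self M) hT2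
  rw [traceNorm_eq_sqrt_trace, ← hsq, hT, Matrix.trace_mul_cycle, hstar, one_mul, hE, Matrix.trace_diagonal]
  rw [Complex.re_sum]
  refine Finset.sum_congr rfl fun i _ => ?_
  simp

private lemma roots_charpoly_isHermitian {M : Matrix n n ℂ} (hM : M.IsHermitian) :
    M.charpoly.roots = Finset.univ.val.map (fun i => ((hM.eigenvalues i : ℝ) : ℂ)) := by
  rw [charpoly_isHermitian hM, Finset.prod_eq_multiset_prod]
  rw [show (Multiset.map (fun i => X - C ((hM.eigenvalues i : ℝ) : ℂ)) Finset.univ.val)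
      = Multiset.map (fun a => X - C a)
          (Finset.univ.val.map fun i => ((hM.eigenvalues i : ℝ) : ℂ)) from by
    rw [Multiset.map_map]; rfl]
  rw [roots_multiset_prod_X_sub_C]

private lemma traceNorm_eq_sum_abs_roots {M : Matrix n n ℂ} (hM : M.IsHermitian) :
    traceNorm M = (M.charpoly.roots.map (fun z : ℂ => ‖z‖)).sum := by
  rw [traceNorm_isHermitian hM, roots_charpoly_isHermitian hM, Multiset.map_map]
  rw [Finset.sum_eq_multiset_sum]
  congr 1
  apply Multiset.map_congr rfl
  intro i _
  simp

private lemma traceNorm_eq_of_charpoly {M : Matrix m m ℂ} {N : Matrix n n ℂ}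
    (hM : M.IsHermitian) (hN : N.IsHermitian) (a b : ℕ)
    (h : M.charpoly * X ^ a = N.charpoly * X ^ b) :
    traceNorm M = traceNorm N := by
  rw [traceNorm_eq_sum_abs_roots hM, traceNorm_eq_sum_abs_roots hN]
  have habs : ∀ (c : ℕ), (((X : ℂ[X]) ^ c).roots.map (fun z : ℂ => ‖z‖)).sum = 0 := by
    intro c
    rw [Polynomial.roots_pow, Polynomial.roots_X, Multiset.nsmul_singleton,
      Multiset.map_replicate, Multiset.sum_replicate]
    simp
  have h1 : ((M.charpoly * X ^ a).roots.map (fun z : ℂ => ‖z‖)).sum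
      = ((M.charpoly.roots).map (fun z : ℂ => ‖z‖)).sum := by
    rw [Polynomial.roots_mul (mul_ne_zero M.charpoly_monic.ne_zero (pow_ne_zero _ X_ne_zero)),
      Multiset.map_add, Multiset.sum_add, habs, add_zero]
  have h2 : ((N.charpoly * X ^ b).roots.map (fun z : ℂ => ‖z‖)).sum
      = ((N.charpoly.roots).map (fun z : ℂ => ‖z‖)).sum := by
    rw [Polynomial.roots_mul (mul_ne_zero N.charpoly_monic.ne_zero (pow_ne_zero _ X_ne_zero)),
      Multiset.map_add, Multiset.sum_add, habs, add_zero]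
  rw [← h1, ← h2, h]

private lemma conjTranspose_kron (A : Matrix l m ℂ) (B : Matrix n p ℂ) :
    (A ⊗ₖ B)ᴴ = Aᴴ ⊗ₖ Bᴴ := by
  ext ⟨i, j⟩ ⟨k, r⟩
  simp [Matrix.conjTranspose_apply, Matrix.kroneckerMap_apply, mul_comm]

private lemma sub_kron (A B : Matrix m m ℂ) (C : Matrix n n ℂ) :
    (A - B) ⊗ₖ C = A ⊗ₖ C - B ⊗ₖ C := by
  ext ⟨i, j⟩ ⟨k, r⟩
  simp [Matrix.kroneckerMap_apply, sub_mul]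

private lemma posSemidef_kron {A : Matrix m m ℂ} {B : Matrix n n ℂ}
    (hA : A.PosSemidef) (hB : B.PosSemidef) : (A ⊗ₖ B).PosSemidef := by
  obtain ⟨C, rfl⟩ := Matrix.posSemidef_iff_eq_transpose_mul_self.mp hA
  obtain ⟨D, rfl⟩ := Matrix.posSemidef_iff_eq_transpose_mul_self.mp hB
  rw [Matrix.mul_kronecker_mul, ← conjTranspose_kron]
  exact Matrix.posSemidef_conjTranspose_mul_self _

private lemma charpoly_transpose {R : Type*} [CommRing R] (M : Matrix m m R) :
    Mᵀ.charpoly = M.charpoly := by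
  rw [Matrix.charpoly, Matrix.charpoly]
  have : charmatrix Mᵀ = (charmatrix M)ᵀ := by
    apply Matrix.ext; intro i j
    by_cases h : i = j
    · subst h; simp [charmatrix_apply]
    · simp [charmatrix_apply_ne _ _ _ h, charmatrix_apply_ne _ _ _ (Ne.symm h)]
  rw [this, Matrix.det_transpose]

private lemma traceNorm_transpose {M : Matrix m m ℂ} (hM : M.IsHermitian) :
    traceNorm Mᵀ = traceNorm M :=
  traceNorm_eq_of_charpoly hM.transpose hM 0 0 (by rw [_root_.charpoly_transpose])

private lemma traceNorm_sum_kron {ι : Type*} [Fintype ι] [DecidableEq ι]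
    (N : ι → Matrix m m ℂ) (P : ι → Matrix n n ℂ)
    (hP : ∀ i, (P i).PosSemidef)
    (hortho : ∀ i j, P i * P j = if i = j then P i else 0)
    (htr : ∀ i, (P i).trace = 1) :
    traceNorm (∑ i, N i ⊗ₖ P i) = ∑ i, traceNorm (N i) := by
  set Q : ι → Matrix m m ℂ := fun i => (Matrix.posSemidef_conjTranspose_mul_self (N i)).sqrt
    with hQ
  set S := ∑ i, N i ⊗ₖ P i with hS
  set T := ∑ i, Q i ⊗ₖ P i with hT
  have key : ∀ (F G : ι → Matrix m m ℂ),
      (∑ i, F i ⊗ₖ P i) * (∑ j, G j ⊗ₖ P j) = ∑ i, (F i * G i) ⊗ₖ P i := by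
    intro F G
    rw [Finset.sum_mul_sum]
    refine Finset.sum_congr rfl fun i _ => ?_
    rw [Finset.sum_eq_single i]
    · rw [← Matrix.mul_kronecker_mul, hortho, if_pos rfl]
    · intro j _ hji
      rw [← Matrix.mul_kronecker_mul, hortho, if_neg (Ne.symm hji), Matrix.kronecker_zero]
    · intro h; exact absurd (Finset.mem_univ i) h
  have hSH : Sᴴ = ∑ i, (N i)ᴴ ⊗ₖ P i := by
    rw [hS, Matrix.conjTranspose_sum]
    refine Finset.sum_congr rfl fun i _ => ?_
    rw [conjTranspose_kron, (hP i).isHermitian.eq]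
  have hSS : Sᴴ * S = ∑ i, ((N i)ᴴ * N i) ⊗ₖ P i := by rw [hSH, hS, key]
  have hTpsd : T.PosSemidef := by
    rw [hT]
    refine Finset.sum_induction _ _ (fun a b ha hb => ha.add hb) Matrix.PosSemidef.zero ?_
    intro i _
    exact posSemidef_kron (Matrix.posSemidef_conjTranspose_mul_self (N i)).posSemidef_sqrt (hP i)
  have hT2 : T ^ 2 = Sᴴ * S := by
    rw [pow_two, hT, key, hSS]
    refine Finset.sum_congr rfl fun i _ => ?_
    rw [hQ]
    rw [(Matrix.posSemidef_conjTranspose_mul_self (N i)).sqrt_mul_self]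
  have hsq : T = (Matrix.posSemidef_conjTranspose_mul_self S).sqrt :=
    hTpsd.eq_sqrt_of_sq_eq (Matrix.posSemidef_conjTranspose_mul_self S) hT2
  have : traceNorm S = (T.trace).re := by rw [traceNorm_eq_sqrt_trace, ← hsq]
  rw [this, hT, Matrix.trace_sum]
  rw [Complex.re_sum]
  refine Finset.sum_congr rfl fun i _ => ?_
  rw [Matrix.trace_kronecker, htr, mul_one]
  rfl

private lemma traceNorm_sandwich (Y : Matrix p q ℂ) (A : Matrix p p ℂ) (hA : A.IsHermitian)
    {W : Matrix p p ℂ} (hW : W.PosSemidef) (hWY : W = Y * Yᴴ) :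
    traceNorm (hW.sqrt * A * hW.sqrt) = traceNorm (Yᴴ * A * Y) := by
  have hR := hW.posSemidef_sqrt
  have hRR : hW.sqrt * hW.sqrt = Y * Yᴴ := by rw [hW.sqrt_mul_self, hWY]
  have hherm1 : (hW.sqrt * A * hW.sqrt).IsHermitian := by
    show _ᴴ = _
    rw [Matrix.conjTranspose_mul, Matrix.conjTranspose_mul, hR.isHermitian.eq, hA.eq,
      mul_assoc]
  have hherm2 : (Yᴴ * A * Y).IsHermitian := by
    show _ᴴ = _
    rw [Matrix.conjTranspose_mul, Matrix.conjTranspose_mul, Matrix.conjTranspose_conjTranspose,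
      hA.eq, ← Matrix.mul_assoc]
  have c1 : (hW.sqrt * A * hW.sqrt).charpoly = (A * (Y * Yᴴ)).charpoly := by
    rw [mul_assoc, _root_.charpoly_mul_comm', mul_assoc, hRR]
  have c2 := charpoly_mul_X_pow (Yᴴ * A) Y
  rw [← Matrix.mul_assoc, _root_.charpoly_mul_comm' (Y * Yᴴ) A] at c2
  refine traceNorm_eq_of_charpoly hherm1 hherm2 (Fintype.card q) (Fintype.card p) ?_
  rw [c1]
  exact c2.symm

private lemma ptraceRight_kron_pure {HR HS : Type*} [Fintype HR] [DecidableEq HR]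
    [Fintype HS] [DecidableEq HS] (ψ : HR × HS → ℂ) (A : Matrix HS HS ℂ) :
    ptraceRight (((1 : Matrix HR HR ℂ) ⊗ₖ A) * (Matrix.of fun i j => ψ i * star (ψ j)))
      = (((Matrix.of fun s r => ψ (r, s)) : Matrix HS HR ℂ)ᴴ * A *
          ((Matrix.of fun s r => ψ (r, s)) : Matrix HS HR ℂ))ᵀ := by
  apply Matrix.ext; intro r r'
  simp only [ptraceRight, Matrix.of_apply, Matrix.mul_apply, Matrix.transpose_apply,
    Matrix.conjTranspose_apply, Matrix.kroneckerMap_apply, Fintype.sum_prod_type,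
    Matrix.one_apply, ite_mul, one_mul, zero_mul, Finset.sum_ite_eq, Finset.mem_univ, if_true,
    Finset.sum_mul, Finset.mul_sum]
  conv_rhs => rw [Finset.sum_comm]
  refine Finset.sum_congr rfl fun s _ => ?_
  rw [Finset.sum_comm]
  simp only [Finset.sum_ite_eq, Finset.mem_univ, if_true]
  refine Finset.sum_congr rfl fun s' _ => ?_
  ring

private lemma outer_ortho {S : Type*} [Fintype S] [DecidableEq S] (e : S → S → ℂ)
    (he : ∀ w w', (∑ i, star (e w i) * e w' i) = if w = w' then 1 else 0) (w w' : S) :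
    ((Matrix.of fun i j => e w i * star (e w j)) : Matrix S S ℂ)
        * (Matrix.of fun i j => e w' i * star (e w' j))
      = if w = w' then ((Matrix.of fun i j => e w i * star (e w j)) : Matrix S S ℂ) else 0 := by
  apply Matrix.ext; intro i j
  rw [Matrix.mul_apply]
  have h1 : ∀ k, ((Matrix.of fun i j => e w i * star (e w j)) : Matrix S S ℂ) i k
      * ((Matrix.of fun i j => e w' i * star (e w' j)) : Matrix S S ℂ) k j
      = (e w i * star (e w' j)) * (star (e w k) * e w' k) := fun k => by
    simp only [Matrix.of_apply]; ring
  rw [Finset.sum_congr rfl fun k _ => h1 k, ← Finset.mul_sum, he]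
  by_cases h : w = w'
  · subst h; simp
  · simp [h]

private lemma outer_trace {S : Type*} [Fintype S] [DecidableEq S] (e : S → S → ℂ)
    (he : ∀ w w', (∑ i, star (e w i) * e w' i) = if w = w' then 1 else 0) (w : S) :
    ((Matrix.of fun i j => e w i * star (e w j)) : Matrix S S ℂ).trace = 1 := by
  have h := he w w
  rw [if_pos rfl] at h
  rw [Matrix.trace]
  simp only [Matrix.diag_apply, Matrix.of_apply]
  rw [← h]
  exact Finset.sum_congr rfl fun i _ => mul_comm _ _

private lemma outer_herm {S : Type*} [Fintype S] [DecidableEq S] (e : S → S → ℂ) (w : S) :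
    ((Matrix.of fun i j => e w i * star (e w j)) : Matrix S S ℂ).IsHermitian := by
  show _ᴴ = _
  apply Matrix.ext; intro i j
  simp [Matrix.conjTranspose_apply, mul_comm]

private lemma outer_psd {S : Type*} [Fintype S] [DecidableEq S] (e : S → S → ℂ)
    (he : ∀ w w', (∑ i, star (e w i) * e w' i) = if w = w' then 1 else 0) (w : S) :
    ((Matrix.of fun i j => e w i * star (e w j)) : Matrix S S ℂ).PosSemidef := by
  refine Matrix.posSemidef_iff_eq_transpose_mul_self.mpr
    ⟨Matrix.of fun i j => e w i * star (e w j), ?_⟩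
  rw [(outer_herm e w).eq, outer_ortho e he w w, if_pos rfl]


end Aux

section Main

open Matrix Finset

set_option maxHeartbeats 2000000 in
/-- Lemma (Section IV of the paper, generalizing Lemma 4 of Wilde et al.):
for a purification `φ = |ψ⟩⟨ψ|` of `ω = Tr_R φ`, the sum of sandwiched
trace-norm distances between the two measurement families equals the trace
distance of the corresponding classical-quantum states. -/
theorem sum_sandwiched_traceNorm_eq_traceNorm_cq_states
    {HR HA HB SA SB : Type*}
    [Fintype HR] [DecidableEq HR] [Fintype HA] [DecidableEq HA]
    [Fintype HB] [DecidableEq HB] [Fintype SA] [DecidableEq SA]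
    [Fintype SB] [DecidableEq SB]
    -- the unit vector ψ and its associated pure state φ
    (ψ : HR × HA × HB → ℂ)
    (hψ : ∑ i, Complex.normSq (ψ i) = 1)
    (φ : Matrix (HR × HA × HB) (HR × HA × HB) ℂ)
    (hφ : φ = Matrix.of fun i j => ψ i * star (ψ j))
    -- the reduced density operator on H_A ⊗ H_B
    (ω : Matrix (HA × HB) (HA × HB) ℂ)
    (hω : ω = ptraceLeft φ)
    -- the measurement operator families
    (Λt : SA → Matrix HA HA ℂ) (Λ : SA → Matrix HA HA ℂ)
    (ΛB : SB → Matrix HB HB ℂ)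
    (hΛt : ∀ w, (Λt w).PosSemidef) (hΛ : ∀ w, (Λ w).PosSemidef)
    (hΛB : ∀ w, (ΛB w).PosSemidef)
    -- orthonormal families in the auxiliary spaces ℂ^{S_A} and ℂ^{S_B}
    (eA : SA → SA → ℂ)
    (heA : ∀ w w', (∑ i, star (eA w i) * eA w' i) = if w = w' then 1 else 0)
    (eB : SB → SB → ℂ)
    (heB : ∀ w w', (∑ i, star (eB w i) * eB w' i) = if w = w' then 1 else 0) :
    ∑ wA : SA, ∑ wB : SB,
        traceNorm (matSqrt ω * ((Λt wA - Λ wA) ⊗ₖ ΛB wB) * matSqrt ω)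
      = traceNorm (∑ wA : SA, ∑ wB : SB,
          (ptraceRight (((1 : Matrix HR HR ℂ) ⊗ₖ (Λt wA ⊗ₖ ΛB wB)) * φ)
            - ptraceRight (((1 : Matrix HR HR ℂ) ⊗ₖ (Λ wA ⊗ₖ ΛB wB)) * φ)) ⊗ₖ
          ((Matrix.of fun i j => eA wA i * star (eA wA j)) ⊗ₖ
           (Matrix.of fun i j => eB wB i * star (eB wB j)))) := by
  subst hω
  subst hφ
  set Y : Matrix (HA × HB) HR ℂ := Matrix.of fun s r => ψ (r, s) with hY
  have hωY : ptraceLeft (Matrix.of fun i j => ψ i * star (ψ j)) = Y * Yᴴ := by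
    apply Matrix.ext; intro s s'
    simp [ptraceLeft, Matrix.mul_apply, Matrix.conjTranspose_apply, hY]
  have hpsd : (Y * Yᴴ).PosSemidef := Matrix.posSemidef_self_mul_conjTranspose Y
  have hms : matSqrt (ptraceLeft (Matrix.of fun i j => ψ i * star (ψ j))) = hpsd.sqrt := by
    rw [hωY, matSqrt_of_posSemidef hpsd]
  have hAherm : ∀ wA wB, ((Λt wA - Λ wA) ⊗ₖ ΛB wB).IsHermitian := fun wA wB => by
    show _ᴴ = _
    rw [conjTranspose_kron, ((hΛt wA).isHermitian.sub (hΛ wA).isHermitian).eq,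
      (hΛB wB).isHermitian.eq]
  -- rewrite the left-hand side termwise
  have hL : ∀ wA wB,
      traceNorm (matSqrt (ptraceLeft (Matrix.of fun i j => ψ i * star (ψ j)))
          * ((Λt wA - Λ wA) ⊗ₖ ΛB wB)
          * matSqrt (ptraceLeft (Matrix.of fun i j => ψ i * star (ψ j))))
        = traceNorm (Yᴴ * ((Λt wA - Λ wA) ⊗ₖ ΛB wB) * Y) := fun wA wB => by
    rw [hms]
    exact traceNorm_sandwich Y _ (hAherm wA wB) hpsd rfl
  -- rewrite the right-hand side summands
  have hRS : ∀ (wA : SA) (wB : SB),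
      ptraceRight (((1 : Matrix HR HR ℂ) ⊗ₖ (Λt wA ⊗ₖ ΛB wB))
            * (Matrix.of fun i j => ψ i * star (ψ j)))
        - ptraceRight (((1 : Matrix HR HR ℂ) ⊗ₖ (Λ wA ⊗ₖ ΛB wB))
            * (Matrix.of fun i j => ψ i * star (ψ j)))
      = (Yᴴ * ((Λt wA - Λ wA) ⊗ₖ ΛB wB) * Y)ᵀ := fun wA wB => by
    rw [ptraceRight_kron_pure ψ (Λt wA ⊗ₖ ΛB wB), ptraceRight_kron_pure ψ (Λ wA ⊗ₖ ΛB wB),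
      ← Matrix.transpose_sub, ← Matrix.sub_mul, ← Matrix.mul_sub, ← sub_kron]
  simp only [hRS]
  calc ∑ wA : SA, ∑ wB : SB,
        traceNorm (matSqrt (ptraceLeft (Matrix.of fun i j => ψ i * star (ψ j)))
          * ((Λt wA - Λ wA) ⊗ₖ ΛB wB)
          * matSqrt (ptraceLeft (Matrix.of fun i j => ψ i * star (ψ j))))
      = ∑ wA : SA, ∑ wB : SB, traceNorm (Yᴴ * ((Λt wA - Λ wA) ⊗ₖ ΛB wB) * Y) :=
        Finset.sum_congr rfl fun wA _ => Finset.sum_congr rfl fun wB _ => hL wA wB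
    _ = ∑ w : SA × SB, traceNorm (Yᴴ * ((Λt w.1 - Λ w.1) ⊗ₖ ΛB w.2) * Y) := by
        rw [Fintype.sum_prod_type]
    _ = ∑ w : SA × SB, traceNorm ((Yᴴ * ((Λt w.1 - Λ w.1) ⊗ₖ ΛB w.2) * Y)ᵀ) :=
        Finset.sum_congr rfl fun w _ => (traceNorm_transpose (by
          show _ᴴ = _
          rw [Matrix.conjTranspose_mul, Matrix.conjTranspose_mul,
            Matrix.conjTranspose_conjTranspose, (hAherm w.1 w.2).eq, ← Matrix.mul_assoc])).symm
    _ = traceNorm (∑ w : SA × SB, (Yᴴ * ((Λt w.1 - Λ w.1) ⊗ₖ ΛB w.2) * Y)ᵀ ⊗ₖ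
          ((Matrix.of fun i j => eA w.1 i * star (eA w.1 j)) ⊗ₖ
           (Matrix.of fun i j => eB w.2 i * star (eB w.2 j)))) := by
        rw [traceNorm_sum_kron]
        · intro w
          exact posSemidef_kron (outer_psd eA heA w.1) (outer_psd eB heB w.2)
        · intro w w'
          rw [← Matrix.mul_kronecker_mul, outer_ortho eA heA, outer_ortho eB heB]
          by_cases h1 : w.1 = w'.1
          · by_cases h2 : w.2 = w'.2
            · have : w = w' := Prod.ext h1 h2
              simp [this]
            · have : ¬ (w = w') := fun hc => h2 (by rw [hc])
              simp [h1, h2, this, Matrix.kronecker_zero]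
          · have : ¬ (w = w') := fun hc => h1 (by rw [hc])
            simp [h1, this, Matrix.zero_kronecker]
        · intro w
          rw [Matrix.trace_kronecker, outer_trace eA heA, outer_trace eB heB, mul_one]
    _ = traceNorm (∑ wA : SA, ∑ wB : SB, (Yᴴ * ((Λt wA - Λ wA) ⊗ₖ ΛB wB) * Y)ᵀ ⊗ₖ
          ((Matrix.of fun i j => eA wA i * star (eA wA j)) ⊗ₖ
           (Matrix.of fun i j => eB wB i * star (eB wB j)))) := by
        rw [Fintype.sum_prod_type]

end Main
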